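/- Let K be the Read–Bajraktarević operator on the complete metric space F of continuous functions ψ : [p₁,p_N] → ℝ with ψ(p₁) = q₁ and ψ(p_N) = q_N, equipped with the sup metric, defined by (Kψ)(p) = α_i ψ(S_i^{-1}(p)) + g(p) - α_i B_m(g, S_i^{-1}(p)) for p ∈ [p_i, p_{i+1}]. Then Kψ is well-defined and continuous at each interior knot p_i (i.e., the two defining expressions agree at shared endpoints and both equal q_i), Kψ ∈ F, and K is a contraction with ratio max_i |α_i| < 1; hence K has a unique fixed point ψ* satisfying ψ*(p_i) = q_i for all i. -/

import Mathlib

private lemma rb_union_cont {f : ℝ → ℝ} {s t : Set ℝ} (hs : IsClosed s) (ht : IsClosed t)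
    (hfs : ContinuousOn f s) (hft : ContinuousOn f t) : ContinuousOn f (s ∪ t) := by
  intro x hx
  rcases hx with hx | hx
  · by_cases hxt : x ∈ t
    · exact (hfs x hx).union (hft x hxt)
    · exact (hfs x hx).union
        (continuousWithinAt_of_notMem_closure (by rwa [ht.closure_eq]))
  · by_cases hxs : x ∈ s
    · exact (hfs x hxs).union (hft x hx)
    · exact (continuousWithinAt_of_notMem_closure (by rwa [hs.closure_eq])).union (hft x hx)

private lemma rb_mono {N : ℕ} {p : ℕ → ℝ} (hp : ∀ i, i + 1 < N → p i < p (i + 1)) :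
    ∀ j, j < N → ∀ i, i ≤ j → p i ≤ p j := by
  intro j
  induction j with
  | zero =>
    intro _ i hi
    have : i = 0 := by omega
    rw [this]
  | succ j ih =>
    intro hj i hi
    rcases Nat.eq_or_lt_of_le hi with h | h
    · rw [h]
    · exact (ih (by omega) i (by omega)).trans (hp j hj).le

private lemma rb_smono {N : ℕ} {p : ℕ → ℝ} (hp : ∀ i, i + 1 < N → p i < p (i + 1)) :
    ∀ j, j < N → ∀ i, i < j → p i < p j := by
  intro j
  induction j with
  | zero => omega
  | succ j ih =>
    intro hj i hi
    exact lt_of_le_of_lt (rb_mono hp j (by omega) i (by omega)) (hp j hj)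

/-- The index of the subinterval containing `x`. -/
private noncomputable def rbIdx (N : ℕ) (p : ℕ → ℝ) (x : ℝ) : ℕ :=
  sInf {i | x < p (i + 1) ∨ N ≤ i + 2}

/-- The Read–Bajraktarević operator
`(Kψ)(x) = αᵢ ψ(Sᵢ⁻¹(x)) + g(x) - αᵢ Bₘ(g, Sᵢ⁻¹(x))` for `x ∈ [pᵢ, pᵢ₊₁]`
is well defined at the shared knots (both defining expressions equal `qᵢ`
there), maps the space `F` of continuous functions on `[p₁,p_N]` with the
endpoint values into itself, and is a contraction with ratio
`max_i |αᵢ| < 1`; hence it has a (unique on `[p₁,p_N]`) fixed point, which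
interpolates all the data.  (Indices `0,…,N-1` correspond to `1,…,N`.) -/
theorem read_bajraktarevic_operator
    (N : ℕ) (hN : 2 ≤ N) (p q : ℕ → ℝ)
    (hp : ∀ i, i + 1 < N → p i < p (i + 1))
    (a b α : ℕ → ℝ)
    (ha : ∀ i, i + 1 < N → a i ≠ 0)
    (hS₁ : ∀ i, i + 1 < N → a i * p 0 + b i = p i)
    (hSN : ∀ i, i + 1 < N → a i * p (N - 1) + b i = p (i + 1))
    (s : ℝ) (hs : s < 1) (hαs : ∀ i, i + 1 < N → |α i| ≤ s)
    (g Bm : ℝ → ℝ)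
    (hgc : ContinuousOn g (Set.Icc (p 0) (p (N - 1))))
    (hgi : ∀ i, i < N → g (p i) = q i)
    (hBc : ContinuousOn Bm (Set.Icc (p 0) (p (N - 1))))
    (hB₁ : Bm (p 0) = q 0) (hBN : Bm (p (N - 1)) = q (N - 1))
    -- `Fprop ψ` says `ψ` belongs to the complete metric space `𝓕`
    (Fprop : (ℝ → ℝ) → Prop)
    (hF : ∀ ψ, Fprop ψ ↔ ContinuousOn ψ (Set.Icc (p 0) (p (N - 1))) ∧
      ψ (p 0) = q 0 ∧ ψ (p (N - 1)) = q (N - 1))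
    -- `Kfun ψ i` is the defining expression of `Kψ` on the `i`-th subinterval
    (Kfun : (ℝ → ℝ) → ℕ → ℝ → ℝ)
    (hK : ∀ ψ i x, Kfun ψ i x =
      α i * ψ ((x - b i) / a i) + g x - α i * Bm ((x - b i) / a i)) :
    -- well-definedness and continuity at the shared knots
    (∀ ψ, Fprop ψ → ∀ i, i + 2 < N →
      Kfun ψ i (p (i + 1)) = q (i + 1) ∧ Kfun ψ (i + 1) (p (i + 1)) = q (i + 1)) ∧
    -- `K` maps `F` into `F`
    (∀ ψ, Fprop ψ → ∃ Kψ : ℝ → ℝ, Fprop Kψ ∧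
      ∀ i, i + 1 < N → ∀ x ∈ Set.Icc (p i) (p (i + 1)), Kψ x = Kfun ψ i x) ∧
    -- `K` is a contraction with ratio `s = max_i |α i| < 1`
    (∀ ψ φ Kψ Kφ : ℝ → ℝ, Fprop ψ → Fprop φ →
      (∀ i, i + 1 < N → ∀ x ∈ Set.Icc (p i) (p (i + 1)), Kψ x = Kfun ψ i x) →
      (∀ i, i + 1 < N → ∀ x ∈ Set.Icc (p i) (p (i + 1)), Kφ x = Kfun φ i x) →
      ∀ C : ℝ, (∀ y ∈ Set.Icc (p 0) (p (N - 1)), |ψ y - φ y| ≤ C) →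
        ∀ x ∈ Set.Icc (p 0) (p (N - 1)), |Kψ x - Kφ x| ≤ s * C) ∧
    -- existence of a fixed point, unique on `[p₁,p_N]`, interpolating the data
    (∃ ψ : ℝ → ℝ, Fprop ψ ∧
      (∀ i, i + 1 < N → ∀ x ∈ Set.Icc (p i) (p (i + 1)), ψ x = Kfun ψ i x) ∧
      (∀ i, i < N → ψ (p i) = q i) ∧
      (∀ φ : ℝ → ℝ, Fprop φ →
        (∀ i, i + 1 < N → ∀ x ∈ Set.Icc (p i) (p (i + 1)), φ x = Kfun φ i x) →
        Set.EqOn ψ φ (Set.Icc (p 0) (p (N - 1))))) := by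
  classical
  have hN1 : 0 + 1 < N := by omega
  have hN2 : N - 2 + 1 = N - 1 := by omega
  have hNsub : N - 1 < N := by omega
  have hmono : ∀ i j : ℕ, i ≤ j → j < N → p i ≤ p j := fun i j hij hj => rb_mono hp j hj i hij
  have hsmono : ∀ i j : ℕ, i < j → j < N → p i < p j := fun i j hij hj => rb_smono hp j hj i hij
  have hple : p 0 ≤ p (N - 1) := hmono 0 (N - 1) (by omega) hNsub
  have hplt : p 0 < p (N - 1) := hsmono 0 (N - 1) (by omega) hNsub
  have hp0I : p 0 ∈ Set.Icc (p 0) (p (N - 1)) := ⟨le_refl _, hple⟩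
  have hpNI : p (N - 1) ∈ Set.Icc (p 0) (p (N - 1)) := ⟨hple, le_refl _⟩
  have hapos : ∀ i, i + 1 < N → 0 < a i := by
    intro i hi
    have h1 := hS₁ i hi; have h2 := hSN i hi; have h3 := hp i hi
    by_contra hcon
    push_neg at hcon
    have := mul_le_mul_of_nonpos_left hple hcon
    linarith
  have hSinv1 : ∀ i, i + 1 < N → (p i - b i) / a i = p 0 := by
    intro i hi
    rw [div_eq_iff (ha i hi)]
    have := hS₁ i hi
    nlinarith [hS₁ i hi]
  have hSinvN : ∀ i, i + 1 < N → (p (i + 1) - b i) / a i = p (N - 1) := by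
    intro i hi
    rw [div_eq_iff (ha i hi)]
    nlinarith [hSN i hi]
  have hSinvmem : ∀ i, i + 1 < N → ∀ x ∈ Set.Icc (p i) (p (i + 1)),
      (x - b i) / a i ∈ Set.Icc (p 0) (p (N - 1)) := by
    intro i hi x hx
    obtain ⟨hx1, hx2⟩ := hx
    have h1 := hS₁ i hi; have h2 := hSN i hi; have hai := hapos i hi
    constructor
    · rw [le_div_iff₀ hai]; nlinarith
    · rw [div_le_iff₀ hai]; nlinarith
  have hvalL : ∀ ψ : ℝ → ℝ, Fprop ψ → ∀ i, i + 1 < N → Kfun ψ i (p i) = q i := by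
    intro ψ hψ i hi
    obtain ⟨-, hψ0, -⟩ := (hF ψ).1 hψ
    rw [hK, hSinv1 i hi, hψ0, hB₁, hgi i (by omega)]
    ring
  have hvalR : ∀ ψ : ℝ → ℝ, Fprop ψ → ∀ i, i + 1 < N → Kfun ψ i (p (i + 1)) = q (i + 1) := by
    intro ψ hψ i hi
    obtain ⟨-, -, hψN⟩ := (hF ψ).1 hψ
    rw [hK, hSinvN i hi, hψN, hBN, hgi (i + 1) hi]
    ring
  have part1 : ∀ ψ, Fprop ψ → ∀ i, i + 2 < N →
      Kfun ψ i (p (i + 1)) = q (i + 1) ∧ Kfun ψ (i + 1) (p (i + 1)) = q (i + 1) :=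
    fun ψ hψ i hi => ⟨hvalR ψ hψ i (by omega), hvalL ψ hψ (i + 1) (by omega)⟩
  -- properties of the subinterval index
  have hidxlt : ∀ x, rbIdx N p x + 1 < N := by
    intro x
    have hmem : N - 2 ∈ {i : ℕ | x < p (i + 1) ∨ N ≤ i + 2} := Or.inr (by omega)
    have h := Nat.sInf_le hmem
    unfold rbIdx
    omega
  have hidxmem : ∀ x, x < p (rbIdx N p x + 1) ∨ N ≤ rbIdx N p x + 2 := by
    intro x
    have hne : ({i : ℕ | x < p (i + 1) ∨ N ≤ i + 2}).Nonempty := ⟨N - 2, Or.inr (by omega)⟩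
    exact Nat.sInf_mem hne
  have hidxmin : ∀ x, ∀ k, k < rbIdx N p x → p (k + 1) ≤ x ∧ k + 2 < N := by
    intro x k hk
    have h := Nat.notMem_of_lt_sInf hk
    simp only [Set.mem_setOf_eq, not_or, not_lt, not_le] at h
    exact ⟨h.1, by omega⟩
  have hcov : ∀ x ∈ Set.Icc (p 0) (p (N - 1)),
      x ∈ Set.Icc (p (rbIdx N p x)) (p (rbIdx N p x + 1)) := by
    intro x hx
    constructor
    · rcases Nat.eq_zero_or_pos (rbIdx N p x) with h0 | h0
      · rw [h0]; exact hx.1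
      · have h := (hidxmin x (rbIdx N p x - 1) (by omega)).1
        have hc : rbIdx N p x - 1 + 1 = rbIdx N p x := by omega
        rwa [hc] at h
    · rcases hidxmem x with h | h
      · exact h.le
      · have hix : rbIdx N p x + 1 = N - 1 := by have := hidxlt x; omega
        rw [hix]; exact hx.2
  have hagree : ∀ ψ : ℝ → ℝ, Fprop ψ → ∀ i, i + 1 < N → ∀ x ∈ Set.Icc (p i) (p (i + 1)),
      Kfun ψ (rbIdx N p x) x = Kfun ψ i x := by
    intro ψ hψ i hi x hx
    rcases lt_trichotomy (rbIdx N p x) i with h | h | h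
    · exfalso
      rcases hidxmem x with hc | hc
      · have hle : p (rbIdx N p x + 1) ≤ p i := hmono (rbIdx N p x + 1) i (by omega) (by omega)
        linarith [hx.1]
      · have := hidxlt x; omega
    · rw [h]
    · obtain ⟨hle, hiN⟩ := hidxmin x i h
      have hxeq : x = p (i + 1) := le_antisymm hx.2 hle
      have hji : rbIdx N p x = i + 1 := by
        by_contra hne
        have hij2 : i + 1 < rbIdx N p x := by omega
        have hc : rbIdx N p x - 1 + 1 = rbIdx N p x := by omega
        have h1 : p (rbIdx N p x) ≤ x := by
          have := (hidxmin x (rbIdx N p x - 1) (by omega)).1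
          rwa [hc] at this
        have hlt : p (i + 1) < p (rbIdx N p x) :=
          hsmono (i + 1) (rbIdx N p x) hij2 (by have := hidxlt x; omega)
        linarith
      rw [hji, hxeq, (part1 ψ hψ i (by omega)).2, (part1 ψ hψ i (by omega)).1]
  have hKcont : ∀ ψ : ℝ → ℝ, Fprop ψ → ∀ i, i + 1 < N →
      ContinuousOn (Kfun ψ i) (Set.Icc (p i) (p (i + 1))) := by
    intro ψ hψ i hi
    obtain ⟨hψc, -, -⟩ := (hF ψ).1 hψ
    have hfun : Kfun ψ i =
        fun x => α i * ψ ((x - b i) / a i) + g x - α i * Bm ((x - b i) / a i) :=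
      funext fun x => hK ψ i x
    rw [hfun]
    have hsub : Set.Icc (p i) (p (i + 1)) ⊆ Set.Icc (p 0) (p (N - 1)) :=
      Set.Icc_subset_Icc (hmono 0 i (by omega) (by omega)) (hmono (i + 1) (N - 1) (by omega) hNsub)
    have hSc : ContinuousOn (fun x : ℝ => (x - b i) / a i) (Set.Icc (p i) (p (i + 1))) :=
      ((continuous_id.sub continuous_const).div_const _).continuousOn
    exact ((continuousOn_const.mul (hψc.comp hSc (hSinvmem i hi))).add (hgc.mono hsub)).sub
      (continuousOn_const.mul (hBc.comp hSc (hSinvmem i hi)))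
  -- `K` maps `F` to `F`
  have part2core : ∀ ψ : ℝ → ℝ, Fprop ψ →
      Fprop (fun x => Kfun ψ (rbIdx N p x) x) ∧
      ∀ i, i + 1 < N → ∀ x ∈ Set.Icc (p i) (p (i + 1)),
        Kfun ψ (rbIdx N p x) x = Kfun ψ i x := by
    intro ψ hψ
    have hag := hagree ψ hψ
    refine ⟨?_, fun i hi x hx => hag i hi x hx⟩
    rw [hF]
    refine ⟨?_, ?_, ?_⟩
    · have key : ∀ j, j + 1 < N → ContinuousOn (fun x => Kfun ψ (rbIdx N p x) x)
          (Set.Icc (p 0) (p (j + 1))) := by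
        intro j
        induction j with
        | zero =>
          intro hj
          exact (hKcont ψ hψ 0 hj).congr (fun x hx => hag 0 hj x hx)
        | succ j ih =>
          intro hj
          have hj' : j + 1 < N := by omega
          have hu : Set.Icc (p 0) (p (j + 1)) ∪ Set.Icc (p (j + 1)) (p (j + 1 + 1)) =
              Set.Icc (p 0) (p (j + 1 + 1)) :=
            Set.Icc_union_Icc_eq_Icc (hmono 0 (j + 1) (by omega) (by omega)) (hp (j + 1) hj).le
          rw [← hu]
          exact rb_union_cont isClosed_Icc isClosed_Icc (ih hj')
            ((hKcont ψ hψ (j + 1) hj).congr (fun x hx => hag (j + 1) hj x hx))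
      have h := key (N - 2) (by omega)
      rwa [hN2] at h
    · show Kfun ψ (rbIdx N p (p 0)) (p 0) = q 0
      rw [hag 0 hN1 (p 0) ⟨le_refl _, (hp 0 hN1).le⟩]
      exact hvalL ψ hψ 0 hN1
    · show Kfun ψ (rbIdx N p (p (N - 1))) (p (N - 1)) = q (N - 1)
      have hNN : (N - 2) + 1 < N := by omega
      have hmem : p (N - 1) ∈ Set.Icc (p (N - 2)) (p (N - 2 + 1)) := by
        rw [hN2]; exact ⟨hmono (N - 2) (N - 1) (by omega) hNsub, le_refl _⟩
      rw [hag (N - 2) hNN (p (N - 1)) hmem]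
      have h := hvalR ψ hψ (N - 2) hNN
      rwa [hN2] at h
  have part2 : ∀ ψ, Fprop ψ → ∃ Kψ : ℝ → ℝ, Fprop Kψ ∧
      ∀ i, i + 1 < N → ∀ x ∈ Set.Icc (p i) (p (i + 1)), Kψ x = Kfun ψ i x :=
    fun ψ hψ => ⟨fun x => Kfun ψ (rbIdx N p x) x, (part2core ψ hψ).1, (part2core ψ hψ).2⟩
  have hs0 : 0 ≤ s := le_trans (abs_nonneg (α 0)) (hαs 0 hN1)
  have part3 : ∀ ψ φ Kψ Kφ : ℝ → ℝ, Fprop ψ → Fprop φ →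
      (∀ i, i + 1 < N → ∀ x ∈ Set.Icc (p i) (p (i + 1)), Kψ x = Kfun ψ i x) →
      (∀ i, i + 1 < N → ∀ x ∈ Set.Icc (p i) (p (i + 1)), Kφ x = Kfun φ i x) →
      ∀ C : ℝ, (∀ y ∈ Set.Icc (p 0) (p (N - 1)), |ψ y - φ y| ≤ C) →
        ∀ x ∈ Set.Icc (p 0) (p (N - 1)), |Kψ x - Kφ x| ≤ s * C := by
    intro ψ φ Kψ Kφ hψ hφ hKψ hKφ C hC x hx
    have hxj := hcov x hx
    have hjN := hidxlt x
    have hy := hSinvmem (rbIdx N p x) hjN x hxj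
    rw [hKψ (rbIdx N p x) hjN x hxj, hKφ (rbIdx N p x) hjN x hxj, hK, hK]
    have heq : α (rbIdx N p x) * ψ ((x - b (rbIdx N p x)) / a (rbIdx N p x)) + g x -
        α (rbIdx N p x) * Bm ((x - b (rbIdx N p x)) / a (rbIdx N p x)) -
        (α (rbIdx N p x) * φ ((x - b (rbIdx N p x)) / a (rbIdx N p x)) + g x -
        α (rbIdx N p x) * Bm ((x - b (rbIdx N p x)) / a (rbIdx N p x))) =
        α (rbIdx N p x) * (ψ ((x - b (rbIdx N p x)) / a (rbIdx N p x)) -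
          φ ((x - b (rbIdx N p x)) / a (rbIdx N p x))) := by ring
    rw [heq, abs_mul]
    exact mul_le_mul (hαs _ hjN) (hC _ hy) (abs_nonneg _) hs0
  refine ⟨part1, part2, part3, ?_⟩
  -- the fixed point, via the Banach fixed point theorem on the closed subspace
  -- of `C([p₁,p_N], ℝ)` of functions with the prescribed endpoint values
  haveI : CompactSpace ↥(Set.Icc (p 0) (p (N - 1))) :=
    isCompact_iff_compactSpace.mp isCompact_Icc
  set X := ↥(Set.Icc (p 0) (p (N - 1))) with hXdef
  set x₀ : X := ⟨p 0, hp0I⟩ with hx₀def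
  set x₁ : X := ⟨p (N - 1), hpNI⟩ with hx₁def
  set E : Set C(X, ℝ) := {f | f x₀ = q 0 ∧ f x₁ = q (N - 1)} with hEdef
  have hEclosed : IsClosed E := by
    have hEeq : E = {f : C(X, ℝ) | f x₀ = q 0} ∩ {f : C(X, ℝ) | f x₁ = q (N - 1)} := rfl
    rw [hEeq]
    exact (isClosed_eq (continuous_eval_const x₀) continuous_const).inter
      (isClosed_eq (continuous_eval_const x₁) continuous_const)
  haveI : CompleteSpace ↥E := hEclosed.isComplete.completeSpace_coe
  -- extension of a continuous map on the interval to all of `ℝ`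
  set ψe : C(X, ℝ) → ℝ → ℝ := fun f x => f (Set.projIcc (p 0) (p (N - 1)) hple x) with hψedef
  have hexteq : ∀ f : C(X, ℝ), ∀ x, ∀ hx : x ∈ Set.Icc (p 0) (p (N - 1)),
      ψe f x = f ⟨x, hx⟩ := by
    intro f x hx
    simp only [hψedef]
    rw [Set.projIcc_of_mem hple hx]
  have hFe : ∀ f : C(X, ℝ), f ∈ E → Fprop (ψe f) := by
    intro f hf
    rw [hF]
    refine ⟨(f.continuous.comp continuous_projIcc).continuousOn, ?_, ?_⟩
    · rw [hexteq f (p 0) hp0I]; exact hf.1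
    · rw [hexteq f (p (N - 1)) hpNI]; exact hf.2
  have hTcont : ∀ f : C(X, ℝ), f ∈ E →
      Continuous fun x : X => Kfun (ψe f) (rbIdx N p ↑x) ↑x := by
    intro f hf
    have h := ((hF _).1 (part2core (ψe f) (hFe f hf)).1).1
    exact h.restrict
  set T : ↥E → ↥E := fun f =>
    ⟨⟨fun x : X => Kfun (ψe f.1) (rbIdx N p ↑x) ↑x, hTcont f.1 f.2⟩,
      ⟨((hF _).1 (part2core (ψe f.1) (hFe f.1 f.2)).1).2.1,
        ((hF _).1 (part2core (ψe f.1) (hFe f.1 f.2)).1).2.2⟩⟩ with hTdef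
  have hTlip : ∀ f h : ↥E, dist (T f) (T h) ≤ s * dist f h := by
    intro f h
    rw [Subtype.dist_eq]
    refine (ContinuousMap.dist_le (mul_nonneg hs0 dist_nonneg)).mpr ?_
    intro x
    have hC : ∀ y ∈ Set.Icc (p 0) (p (N - 1)), |ψe f.1 y - ψe h.1 y| ≤ dist f h := by
      intro y hy
      rw [hexteq _ y hy, hexteq _ y hy, ← Real.dist_eq]
      calc dist (f.1 ⟨y, hy⟩) (h.1 ⟨y, hy⟩) ≤ dist f.1 h.1 :=
            ContinuousMap.dist_apply_le_dist _
        _ = dist f h := (Subtype.dist_eq f h).symm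
    have hm := part3 (ψe f.1) (ψe h.1) (fun y => Kfun (ψe f.1) (rbIdx N p y) y)
      (fun y => Kfun (ψe h.1) (rbIdx N p y) y) (hFe f.1 f.2) (hFe h.1 h.2)
      (part2core _ (hFe f.1 f.2)).2 (part2core _ (hFe h.1 h.2)).2 (dist f h) hC ↑x x.2
    rw [Real.dist_eq]
    exact hm
  have hne0 : p (N - 1) - p 0 ≠ 0 := sub_ne_zero.mpr (ne_of_gt hplt)
  haveI : Nonempty ↥E := by
    refine ⟨⟨⟨fun x : X => q 0 + (↑x - p 0) * (q (N - 1) - q 0) / (p (N - 1) - p 0), ?_⟩, ?_, ?_⟩⟩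
    · exact continuous_const.add
        (((continuous_subtype_val.sub continuous_const).mul continuous_const).div_const _)
    · show q 0 + (p 0 - p 0) * (q (N - 1) - q 0) / (p (N - 1) - p 0) = q 0
      simp
    · show q 0 + (p (N - 1) - p 0) * (q (N - 1) - q 0) / (p (N - 1) - p 0) = q (N - 1)
      field_simp
      ring
  have hCW : ContractingWith ⟨s, hs0⟩ T := by
    constructor
    · show s < 1
      exact_mod_cast hs
    · exact LipschitzWith.of_dist_le_mul fun f h => hTlip f h
  set f₀ : ↥E := ContractingWith.fixedPoint T hCW with hf₀def
  have hfix : T f₀ = f₀ := hCW.fixedPoint_isFixedPt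
  have hfixx : ∀ x : X, Kfun (ψe f₀.1) (rbIdx N p ↑x) ↑x = f₀.1 x := by
    intro x
    have h := congrArg Subtype.val hfix
    exact ContinuousMap.congr_fun h x
  have hFψ : Fprop (ψe f₀.1) := hFe f₀.1 f₀.2
  have hψfix : ∀ i, i + 1 < N → ∀ x ∈ Set.Icc (p i) (p (i + 1)),
      ψe f₀.1 x = Kfun (ψe f₀.1) i x := by
    intro i hi x hx
    have hxI : x ∈ Set.Icc (p 0) (p (N - 1)) :=
      Set.Icc_subset_Icc (hmono 0 i (by omega) (by omega))
        (hmono (i + 1) (N - 1) (by omega) hNsub) hx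
    rw [hexteq _ x hxI, ← hfixx ⟨x, hxI⟩]
    exact hagree (ψe f₀.1) hFψ i hi x hx
  refine ⟨ψe f₀.1, hFψ, hψfix, ?_, ?_⟩
  · -- interpolation of all data
    intro i hi
    by_cases h0 : i = 0
    · subst h0; rw [hexteq _ _ hp0I]; exact f₀.2.1
    by_cases hN' : i = N - 1
    · subst hN'; rw [hexteq _ _ hpNI]; exact f₀.2.2
    · have hi1 : i - 1 + 1 = i := by omega
      have hiN : (i - 1) + 1 < N := by omega
      have hmem : p i ∈ Set.Icc (p (i - 1)) (p (i - 1 + 1)) := by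
        rw [hi1]; exact ⟨hmono (i - 1) i (by omega) hi, le_refl _⟩
      rw [hψfix (i - 1) hiN (p i) hmem]
      have h3 := hvalR (ψe f₀.1) hFψ (i - 1) hiN
      rwa [hi1] at h3
  · -- uniqueness
    intro φ hφ hφfix
    obtain ⟨hφc, hφ0, hφN⟩ := (hF φ).1 hφ
    set fφ : C(X, ℝ) := ⟨(Set.Icc (p 0) (p (N - 1))).restrict φ, hφc.restrict⟩ with hfφdef
    have hfφE : fφ ∈ E := ⟨hφ0, hφN⟩
    have hextφ : ∀ y, ∀ hy : y ∈ Set.Icc (p 0) (p (N - 1)), ψe fφ y = φ y := by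
      intro y hy
      rw [hexteq fφ y hy]
      rfl
    have hfφfix : ∀ x : X, Kfun (ψe fφ) (rbIdx N p ↑x) ↑x = fφ x := by
      intro x
      have hxj := hcov ↑x x.2
      have hjN := hidxlt (↑x : ℝ)
      have hy := hSinvmem (rbIdx N p ↑x) hjN ↑x hxj
      have heq : Kfun (ψe fφ) (rbIdx N p ↑x) ↑x = Kfun φ (rbIdx N p ↑x) ↑x := by
        rw [hK, hK, hextφ _ hy]
      rw [heq]
      exact (hφfix (rbIdx N p ↑x) hjN ↑x hxj).symm
    have hTfφ : T ⟨fφ, hfφE⟩ = ⟨fφ, hfφE⟩ := by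
      apply Subtype.ext
      apply ContinuousMap.ext
      intro x
      exact hfφfix x
    have huniq : (⟨fφ, hfφE⟩ : ↥E) = f₀ := hCW.fixedPoint_unique hTfφ
    intro x hx
    rw [hexteq _ x hx, ← huniq]
    exact rfl
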